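/- arXiv:2103.04355 — 8 statements merged into one kernel-verified Lean document; each statement's English description precedes it below -/
import Mathlib

section
/- For any probability vector p = (p_1,...,p_N), the function G_β(p) = β · log(∑_{k=1}^N p_k^{1+1/β}) is convex in β on (0,∞). -/
open Real Filter Finset

/-- G_β(p) = β log(∑ p_k^{1+1/β}) is convex in β on (0,∞). -/
theorem G_convex (N : ℕ) (hN : 1 ≤ N) (p : Fin N → ℝ)
    (hp : ∀ k, 0 ≤ p k) (hsum : ∑ k, p k = 1) :
    ConvexOn ℝ (Set.Ioi (0 : ℝ))
      (fun β : ℝ => β * Real.log (∑ k, p k ^ (1 + 1 / β))) := by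
  obtain ⟨k0, hk0⟩ : ∃ k, 0 < p k := by
    by_contra h; push_neg at h
    have h0 : ∑ k, p k = 0 := Finset.sum_eq_zero fun k _ => le_antisymm (h k) (hp k)
    rw [hsum] at h0; norm_num at h0
  have hS : ∀ c : ℝ, 0 < ∑ k, p k ^ c := fun c =>
    Finset.sum_pos' (fun k _ => Real.rpow_nonneg (hp k) c)
      ⟨k0, Finset.mem_univ _, Real.rpow_pos_of_pos hk0 c⟩
  refine ⟨convex_Ioi 0, ?_⟩
  intro x hx y hy a b ha hb hab
  rcases ha.eq_or_lt with rfl | ha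
  · have hb1 : b = 1 := by linarith
    subst hb1; simp
  rcases hb.eq_or_lt with rfl | hb
  · have ha1 : a = 1 := by linarith
    subst ha1; simp
  have hb1 : b = 1 - a := by linarith
  subst hb1
  simp only [Set.mem_Ioi] at hx hy
  simp only [smul_eq_mul]
  set β : ℝ := a * x + (1 - a) * y with hβdef
  have hβ : 0 < β := by positivity
  set θ : ℝ := a * x / β with hθdef
  have hθ : 0 < θ := by positivity
  have hβx : β - a * x = (1 - a) * y := by rw [hβdef]; ring
  have h1θ : 1 - θ = (1 - a) * y / β := by
    rw [hθdef, ← hβx, sub_div, div_self hβ.ne']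
  have hθ1 : θ < 1 := by
    have h2 : 0 < (1 - a) * y / β := by positivity
    linarith
  have hθne : θ ≠ 0 := hθ.ne'
  have h1θne : (1 : ℝ) - θ ≠ 0 := by linarith
  have hconj : Real.HolderConjugate (1/θ) (1/(1-θ)) := by
    constructor
    · simp only [one_div, inv_inv, inv_one]; ring
    · positivity
    · exact one_div_pos.mpr (by linarith)
  set f : Fin N → ℝ := fun k => p k ^ ((1 + 1/x) * θ) with hf
  set g : Fin N → ℝ := fun k => p k ^ ((1 + 1/y) * (1 - θ)) with hg
  have key : ∑ k, p k ^ (1 + 1/β) = ∑ k, f k * g k := by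
    refine Finset.sum_congr rfl fun k _ => ?_
    rw [hf, hg]
    rw [← Real.rpow_add_of_nonneg (hp k) (by positivity)
      (mul_nonneg (by positivity) (by linarith))]
    congr 1
    rw [h1θ, hθdef]
    simp only [hβdef]
    field_simp
    ring
  have holder := Real.inner_le_Lp_mul_Lq Finset.univ f g hconj
  have habs1 : ∑ k, |f k| ^ (1/θ) = ∑ k, p k ^ (1 + 1/x) := by
    refine Finset.sum_congr rfl fun k _ => ?_
    rw [hf, abs_of_nonneg (Real.rpow_nonneg (hp k) _), ← Real.rpow_mul (hp k)]
    congr 1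
    field_simp
  have habs2 : ∑ k, |g k| ^ (1/(1-θ)) = ∑ k, p k ^ (1 + 1/y) := by
    refine Finset.sum_congr rfl fun k _ => ?_
    rw [hg, abs_of_nonneg (Real.rpow_nonneg (hp k) _), ← Real.rpow_mul (hp k)]
    congr 1
    field_simp
  rw [habs1, habs2, one_div_one_div, one_div_one_div] at holder
  have hle : ∑ k, p k ^ (1 + 1/β) ≤
      (∑ k, p k ^ (1 + 1/x)) ^ θ * (∑ k, p k ^ (1 + 1/y)) ^ (1 - θ) := by
    rw [key]; exact holder
  have hlog : Real.log (∑ k, p k ^ (1 + 1/β)) ≤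
      θ * Real.log (∑ k, p k ^ (1 + 1/x)) + (1 - θ) * Real.log (∑ k, p k ^ (1 + 1/y)) := by
    calc Real.log (∑ k, p k ^ (1 + 1/β))
        ≤ Real.log ((∑ k, p k ^ (1 + 1/x)) ^ θ * (∑ k, p k ^ (1 + 1/y)) ^ (1 - θ)) :=
          Real.log_le_log (hS _) hle
      _ = θ * Real.log (∑ k, p k ^ (1 + 1/x)) + (1 - θ) * Real.log (∑ k, p k ^ (1 + 1/y)) := by
          rw [Real.log_mul (Real.rpow_pos_of_pos (hS _) _).ne'
            (Real.rpow_pos_of_pos (hS _) _).ne',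
            Real.log_rpow (hS _), Real.log_rpow (hS _)]
  calc β * Real.log (∑ k, p k ^ (1 + 1/β))
      ≤ β * (θ * Real.log (∑ k, p k ^ (1 + 1/x)) +
          (1 - θ) * Real.log (∑ k, p k ^ (1 + 1/y))) :=
        mul_le_mul_of_nonneg_left hlog hβ.le
    _ = a * (x * Real.log (∑ k, p k ^ (1 + 1/x))) +
        (1 - a) * (y * Real.log (∑ k, p k ^ (1 + 1/y))) := by
        rw [h1θ, hθdef]
        field_simp
end

section
/- The function β ↦ β · log(∑_{k=1}^N p_k^{1+1/β}) is non-increasing on (0,∞) for every probability vector p with positive entries; equivalently its derivative equals -∑_k q_k(β) · log(p_k^{1/β} / ∑_j p_j^{1+1/β}) where q_k(β) = p_k^{1+1/β}/∑_j p_j^{1+1/β}, and this derivative is ≤ 0. -/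
open Real Filter Finset

/-- G_β is non-increasing on (0,∞); its derivative is
    -∑_k q_k(β) log(p_k^{1/β}/∑_j p_j^{1+1/β}) ≤ 0. -/
theorem G_antitone_deriv (N : ℕ) (hN : 1 ≤ N) (p : Fin N → ℝ)
    (hp : ∀ k, 0 < p k) (hsum : ∑ k, p k = 1) :
    AntitoneOn (fun β : ℝ => β * Real.log (∑ k, p k ^ (1 + 1 / β)))
      (Set.Ioi (0 : ℝ)) ∧
    ∀ β ∈ Set.Ioi (0 : ℝ),
      HasDerivAt (fun β : ℝ => β * Real.log (∑ k, p k ^ (1 + 1 / β)))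
        (-(∑ k, (p k ^ (1 + 1 / β) / ∑ j, p j ^ (1 + 1 / β)) *
            Real.log (p k ^ (1 / β) / ∑ j, p j ^ (1 + 1 / β)))) β ∧
      (-(∑ k, (p k ^ (1 + 1 / β) / ∑ j, p j ^ (1 + 1 / β)) *
          Real.log (p k ^ (1 / β) / ∑ j, p j ^ (1 + 1 / β)))) ≤ 0 := by
  have hNE : (Finset.univ : Finset (Fin N)).Nonempty := ⟨⟨0, by omega⟩, Finset.mem_univ _⟩
  have key : ∀ β ∈ Set.Ioi (0 : ℝ),
      HasDerivAt (fun β : ℝ => β * Real.log (∑ k, p k ^ (1 + 1 / β)))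
        (-(∑ k, (p k ^ (1 + 1 / β) / ∑ j, p j ^ (1 + 1 / β)) *
            Real.log (p k ^ (1 / β) / ∑ j, p j ^ (1 + 1 / β)))) β ∧
      (-(∑ k, (p k ^ (1 + 1 / β) / ∑ j, p j ^ (1 + 1 / β)) *
          Real.log (p k ^ (1 / β) / ∑ j, p j ^ (1 + 1 / β)))) ≤ 0 := by
    intro β hβ
    have hβ0 : (0:ℝ) < β := hβ
    have hβne : β ≠ 0 := ne_of_gt hβ0
    set S : ℝ := ∑ j, p j ^ (1 + 1 / β) with hSdef
    have hSpos : 0 < S :=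
      Finset.sum_pos (fun k _ => Real.rpow_pos_of_pos (hp k) _) hNE
    have hSne : S ≠ 0 := ne_of_gt hSpos
    -- derivative of the inner sum
    have h1 : HasDerivAt (fun b : ℝ => 1 + 1 / b) (-(β ^ 2)⁻¹) β := by
      simpa [one_div] using ((hasDerivAt_inv hβne).const_add 1)
    have hS' : HasDerivAt (fun b : ℝ => ∑ k, p k ^ (1 + 1 / b))
        (∑ k, -(β ^ 2)⁻¹ * (p k ^ (1 + 1 / β) * Real.log (p k))) β := by
      apply HasDerivAt.fun_sum
      intro k _
      have := (hasDerivAt_const β (p k)).rpow h1 (hp k)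
      simpa [mul_assoc] using this
    have hL : HasDerivAt (fun b : ℝ => Real.log (∑ k, p k ^ (1 + 1 / b)))
        ((∑ k, -(β ^ 2)⁻¹ * (p k ^ (1 + 1 / β) * Real.log (p k))) / S) β :=
      hS'.log hSne
    have hF : HasDerivAt (fun b : ℝ => b * Real.log (∑ k, p k ^ (1 + 1 / b)))
        (1 * Real.log S +
          β * ((∑ k, -(β ^ 2)⁻¹ * (p k ^ (1 + 1 / β) * Real.log (p k))) / S)) β :=
      (hasDerivAt_id β).mul hL
    -- abbreviation
    set A : ℝ := ∑ k, p k ^ (1 + 1 / β) * Real.log (p k) with hAdef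
    have hqsum : ∑ k, p k ^ (1 + 1 / β) / S = 1 := by
      rw [← Finset.sum_div]; exact div_self hSne
    have hexp : ∀ k, Real.log (p k ^ (1 / β) / S)
        = (1 / β) * Real.log (p k) - Real.log S := by
      intro k
      rw [Real.log_div (ne_of_gt (Real.rpow_pos_of_pos (hp k) _)) hSne,
        Real.log_rpow (hp k)]
    -- identify the derivative value
    have heq : 1 * Real.log S +
        β * ((∑ k, -(β ^ 2)⁻¹ * (p k ^ (1 + 1 / β) * Real.log (p k))) / S)
        = -(∑ k, (p k ^ (1 + 1 / β) / S) * Real.log (p k ^ (1 / β) / S)) := by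
      have hL1 : ∑ k, -(β ^ 2)⁻¹ * (p k ^ (1 + 1 / β) * Real.log (p k))
          = -(β ^ 2)⁻¹ * A := by rw [hAdef, Finset.mul_sum]
      have hR1 : ∑ k, (p k ^ (1 + 1 / β) / S) * Real.log (p k ^ (1 / β) / S)
          = (1 / β) * (A / S) - Real.log S := by
        calc ∑ k, (p k ^ (1 + 1 / β) / S) * Real.log (p k ^ (1 / β) / S)
            = ∑ k, ((1 / β) * ((p k ^ (1 + 1 / β) * Real.log (p k)) / S)
                - (p k ^ (1 + 1 / β) / S) * Real.log S) := by
              refine Finset.sum_congr rfl fun k _ => ?_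
              rw [hexp k]; ring
          _ = (1 / β) * (A / S) - 1 * Real.log S := by
              rw [Finset.sum_sub_distrib, ← Finset.mul_sum, ← Finset.sum_div,
                ← Finset.sum_mul, hqsum, ← hAdef]
          _ = (1 / β) * (A / S) - Real.log S := by ring
      rw [hL1, hR1]
      field_simp
      ring
    -- sign of the derivative
    have hsign : 0 ≤ ∑ k, (p k ^ (1 + 1 / β) / S) * Real.log (p k ^ (1 / β) / S) := by
      have hterm : ∀ k ∈ Finset.univ,
          p k ^ (1 + 1 / β) / S - p k
            ≤ (p k ^ (1 + 1 / β) / S) * Real.log (p k ^ (1 / β) / S) := by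
        intro k _
        have hq : p k ^ (1 / β) / S = (p k ^ (1 + 1 / β) / S) / p k := by
          have hsplit : p k ^ (1 + 1 / β) = p k * p k ^ (1 / β) := by
            rw [Real.rpow_add (hp k), Real.rpow_one]
          rw [hsplit]
          field_simp [ne_of_gt (hp k)]
        set q : ℝ := p k ^ (1 + 1 / β) / S with hqdef
        have hqpos : 0 < q := div_pos (Real.rpow_pos_of_pos (hp k) _) hSpos
        have hlog := Real.log_le_sub_one_of_pos (div_pos (hp k) hqpos)
        have hlog2 : Real.log (q / p k) = -Real.log (p k / q) := by
          rw [← Real.log_inv, inv_div]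
        have hcancel : q * (p k / q) = p k := by
          field_simp
        rw [hq, hlog2]
        nlinarith [hqpos, hlog]
      have := Finset.sum_le_sum hterm
      rw [Finset.sum_sub_distrib, hqsum, hsum] at this
      linarith
    exact ⟨heq ▸ hF, neg_nonpos_of_nonneg hsign⟩
  refine ⟨?_, key⟩
  refine antitoneOn_of_deriv_nonpos (convex_Ioi 0) ?_ ?_ ?_
  · intro x hx
    exact ((key x hx).1.differentiableAt.continuousAt).continuousWithinAt
  · intro x hx
    rw [interior_Ioi] at hx
    exact ((key x hx).1.differentiableAt).differentiableWithinAt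
  · intro x hx
    rw [interior_Ioi] at hx
    rw [(key x hx).1.deriv]
    exact (key x hx).2
end

section
/- The value of the second derivative of the Rényi entropy at α = 0 equals H''_0(p) = 2 log N + (1/N)∑_k (log p_k)^2 - (1/N²)(∑_k log p_k)² + (2/N)∑_k log p_k, and for the uniform distribution p_k = 1/N this equals 0. -/
open Real Filter Finset

set_option maxHeartbeats 1000000

/-- The continuous extension at α = 0 of the second derivative of the Rényi entropy
    equals 2 log N + (1/N)∑(log p_k)² − (1/N²)(∑ log p_k)² + (2/N)∑ log p_k,
    and this value is 0 for the uniform distribution. -/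
theorem renyi_second_deriv_at_zero (N : ℕ) (hN : 1 ≤ N) (p : Fin N → ℝ)
    (hp : ∀ k, 0 < p k) (hsum : ∑ k, p k = 1) :
    Tendsto (deriv (deriv (fun α : ℝ => (1 / (1 - α)) * Real.log (∑ k, p k ^ α))))
      (nhdsWithin 0 (Set.Ioi 0))
      (nhds (2 * Real.log N + (1 / N) * ∑ k, (Real.log (p k)) ^ 2
        - (1 / (N : ℝ) ^ 2) * (∑ k, Real.log (p k)) ^ 2
        + (2 / N) * ∑ k, Real.log (p k))) ∧
    ((∀ k, p k = 1 / N) →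
      2 * Real.log N + (1 / N) * ∑ k, (Real.log (p k)) ^ 2
        - (1 / (N : ℝ) ^ 2) * (∑ k, Real.log (p k)) ^ 2
        + (2 / N) * ∑ k, Real.log (p k) = 0) := by
  have hN0 : (0:ℝ) < N := by exact_mod_cast hN
  set L : Fin N → ℝ := fun k => Real.log (p k) with hLdef
  constructor
  · -- main limit
    set S : ℝ → ℝ := fun α => ∑ k, Real.exp (α * L k) with hSdef
    set S1 : ℝ → ℝ := fun α => ∑ k, L k * Real.exp (α * L k) with hS1def
    set S2 : ℝ → ℝ := fun α => ∑ k, L k ^ 2 * Real.exp (α * L k) with hS2def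
    have hne : Nonempty (Fin N) := Fin.pos_iff_nonempty.mp hN
    have hSpos : ∀ α, 0 < S α := fun α =>
      Finset.sum_pos (fun k _ => Real.exp_pos _) Finset.univ_nonempty
    have hSd : ∀ α, HasDerivAt S (S1 α) α := by
      intro α
      apply HasDerivAt.fun_sum
      intro k _
      simpa [mul_comm] using ((hasDerivAt_id α).mul_const (L k)).exp
    have hS1d : ∀ α, HasDerivAt S1 (S2 α) α := by
      intro α
      apply HasDerivAt.fun_sum
      intro k _
      have h := (((hasDerivAt_id α).mul_const (L k)).exp).const_mul (L k)
      refine h.congr_deriv ?_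
      simp only [id_eq]
      ring
    have hfF : (fun α : ℝ => (1 / (1 - α)) * Real.log (∑ k, p k ^ α))
        = fun α => (1 - α)⁻¹ * Real.log (S α) := by
      funext α
      rw [one_div]
      congr 2
      refine Finset.sum_congr rfl fun k _ => ?_
      rw [Real.rpow_def_of_pos (hp k), mul_comm]
    set G : ℝ → ℝ := fun α => ((1-α)⁻¹)^2 * Real.log (S α) + (1-α)⁻¹ * (S1 α / S α)
      with hGdef
    set H : ℝ → ℝ := fun α => 2 * ((1-α)⁻¹)^3 * Real.log (S α)
      + 2 * ((1-α)⁻¹)^2 * (S1 α / S α)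
      + (1-α)⁻¹ * (S2 α / S α - (S1 α / S α)^2) with hHdef
    have hg : ∀ α : ℝ, α ≠ 1 → HasDerivAt (fun a : ℝ => (1 - a)⁻¹) (((1-α)⁻¹)^2) α := by
      intro α hα
      have h1 : (1:ℝ) - α ≠ 0 := sub_ne_zero.mpr (Ne.symm hα)
      have := ((hasDerivAt_id α).const_sub 1).inv h1
      refine this.congr_deriv ?_
      simp only [id_eq, neg_neg, one_div, inv_pow]
    have hlogS : ∀ α : ℝ, HasDerivAt (fun a => Real.log (S a)) (S1 α / S α) α := by
      intro α
      exact (hSd α).log (hSpos α).ne'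
    have hratio : ∀ α : ℝ, HasDerivAt (fun a => S1 a / S a)
        (S2 α / S α - (S1 α / S α)^2) α := by
      intro α
      have := (hS1d α).div (hSd α) (hSpos α).ne'
      refine this.congr_deriv ?_
      field_simp
    have key1 : ∀ α : ℝ, α ≠ 1 →
        HasDerivAt (fun a : ℝ => (1 - a)⁻¹ * Real.log (S a)) (G α) α := by
      intro α hα
      have := (hg α hα).mul (hlogS α)
      exact this
    have key2 : ∀ α : ℝ, α ≠ 1 → HasDerivAt G (H α) α := by
      intro α hα
      have h1 := ((hg α hα).pow 2).mul (hlogS α)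
      have h2 := (hg α hα).mul (hratio α)
      have := h1.add h2
      refine this.congr_deriv ?_
      have h1' : (1:ℝ) - α ≠ 0 := sub_ne_zero.mpr (Ne.symm hα)
      have hSne : S α ≠ 0 := (hSpos α).ne'
      simp only [hHdef, Pi.pow_apply, Nat.reduceSub, pow_one]
      field_simp
      ring
    have hF1 : ∀ α : ℝ, α ≠ 1 →
        deriv (fun a : ℝ => (1 - a)⁻¹ * Real.log (S a)) α = G α :=
      fun α hα => (key1 α hα).deriv
    have h2 : ∀ α ∈ Set.Iio (1:ℝ),
        deriv (deriv (fun a : ℝ => (1 - a)⁻¹ * Real.log (S a))) α = H α := by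
      intro α hα
      have hev : deriv (fun a : ℝ => (1 - a)⁻¹ * Real.log (S a)) =ᶠ[nhds α] G :=
        Filter.eventually_of_mem (Iio_mem_nhds hα) fun x hx => hF1 x (ne_of_lt hx)
      rw [hev.deriv_eq]
      exact (key2 α (ne_of_lt hα)).deriv
    -- continuity of H at 0
    have hScont : Continuous S := by fun_prop
    have hS1cont : Continuous S1 := by fun_prop
    have hS2cont : Continuous S2 := by fun_prop
    have hc1 : ContinuousAt (fun α : ℝ => (1 - α)⁻¹) 0 :=
      ((continuous_const.sub continuous_id).continuousAt).inv₀ (by norm_num)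
    have hclog : ContinuousAt (fun α => Real.log (S α)) 0 :=
      (Real.continuousAt_log (hSpos 0).ne').comp hScont.continuousAt
    have hcr : ContinuousAt (fun α => S1 α / S α) 0 :=
      hS1cont.continuousAt.div hScont.continuousAt (hSpos 0).ne'
    have hcr2 : ContinuousAt (fun α => S2 α / S α) 0 :=
      hS2cont.continuousAt.div hScont.continuousAt (hSpos 0).ne'
    have hHcont : ContinuousAt H 0 := by
      apply ContinuousAt.add
      apply ContinuousAt.add
      · exact ((continuousAt_const.mul (hc1.pow 3)).mul hclog)
      · exact ((continuousAt_const.mul (hc1.pow 2)).mul hcr)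
      · exact hc1.mul (hcr2.sub (hcr.pow 2))
    have hH0 : H 0 = 2 * Real.log N + (1 / N) * ∑ k, (L k) ^ 2
        - (1 / (N : ℝ) ^ 2) * (∑ k, L k) ^ 2 + (2 / N) * ∑ k, L k := by
      have hS0 : S 0 = N := by simp [hSdef]
      have hS10 : S1 0 = ∑ k, L k := by simp [hS1def]
      have hS20 : S2 0 = ∑ k, (L k)^2 := by simp [hS2def]
      simp only [hHdef, hS0, hS10, hS20]
      norm_num
      field_simp
      ring
    rw [hfF]
    simp only [one_div] at *
    have htend : Tendsto H (nhdsWithin 0 (Set.Ioi 0)) (nhds (H 0)) :=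
      hHcont.continuousWithinAt.tendsto
    rw [hH0] at htend
    refine htend.congr' ?_
    refine Filter.eventually_of_mem (mem_nhdsWithin_of_mem_nhds (Iio_mem_nhds one_pos)) ?_
    intro α hα
    exact (h2 α hα).symm
  · intro huni
    have hlog : ∀ k, L k = -Real.log N := by
      intro k
      rw [hLdef]
      simp only []
      rw [huni k, one_div, Real.log_inv]
    simp only [hLdef] at hlog ⊢
    simp only [hlog, Finset.sum_const, Finset.card_univ, Fintype.card_fin, nsmul_eq_mul]
    have hNne : (N:ℝ) ≠ 0 := hN0.ne'
    field_simp
    ring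
end

section
/- Suppose the probability vector p takes only two distinct values p_0 and q_0 (with k entries equal to p_0 and N−k equal to q_0), satisfying p_0 − q_0 = (1/N)(log p_0 − log q_0) and k·p_0 + (N−k)·q_0 = 1, with 0 < p_0, q_0 < 1, p_0 ≠ q_0. Then the quantity H''_0(p) = 2 log N + (1/N)∑_k (log p_k)² − (1/N²)(∑_k log p_k)² + (2/N)∑_k log p_k equals log(N² p_0 q_0) − N² p_0 q_0 + 1, and is strictly negative. -/
open Real Filter Finset

lemma sum_ite_fin (N k : ℕ) (hkN : k ≤ N) (A B : ℝ) :
    ∑ i : Fin N, (if (i : ℕ) < k then A else B) = k * A + ((N : ℝ) - k) * B := by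
  rw [Fin.sum_univ_eq_sum_range (fun i => if i < k then A else B) N]
  rw [Finset.range_eq_Ico, ← Finset.sum_Ico_consecutive _ (Nat.zero_le k) hkN]
  rw [Finset.sum_congr rfl (fun i hi => if_pos (Finset.mem_Ico.mp hi).2),
      Finset.sum_congr rfl (g := fun _ => B) (fun i hi => if_neg (by
        have := (Finset.mem_Ico.mp hi).1; omega))]
  simp [Nat.cast_sub hkN]

lemma key_ineq (t : ℝ) (ht : 1 < t) : 2 * Real.log t < t - 1/t := by
  have hmono : StrictMonoOn (fun t : ℝ => t - 1/t - 2 * Real.log t) (Set.Ici 1) := by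
    apply strictMonoOn_of_deriv_pos (convex_Ici 1)
    · apply ContinuousOn.sub
      · apply ContinuousOn.sub continuousOn_id
        exact ContinuousOn.div continuousOn_const continuousOn_id
          (fun x hx => by have : (1:ℝ) ≤ x := hx; linarith)
      · exact ContinuousOn.mul continuousOn_const
          (Real.continuousOn_log.mono (fun x hx => by
            have : (1:ℝ) ≤ x := hx; simp; linarith))
    · intro x hx
      rw [interior_Ici] at hx
      have hx1 : (1:ℝ) < x := hx
      have hx0 : x ≠ 0 := by linarith
      have hd : HasDerivAt (fun t : ℝ => t - 1/t - 2 * Real.log t)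
          (1 - (-(1/x^2)) - 2 * (1/x)) x := by
        have h1 : HasDerivAt (fun t : ℝ => 1/t) (-(1/x^2)) x := by
          simpa using (hasDerivAt_inv hx0)
        have h2 : HasDerivAt Real.log (1/x) x := by
          simpa using Real.hasDerivAt_log hx0
        exact ((hasDerivAt_id x).sub h1).sub ((h2.const_mul 2))
      rw [hd.deriv]
      have h3 : 0 < 1 - 1/x := by
        have : 1/x < 1 := by rw [div_lt_one] <;> linarith
        linarith
      have : (1 - 1/x)^2 > 0 := by positivity
      field_simp at this ⊢
      nlinarith
  have h0 : (fun t : ℝ => t - 1/t - 2 * Real.log t) 1 < (fun t : ℝ => t - 1/t - 2 * Real.log t) t :=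
    hmono (by norm_num) (by exact le_of_lt ht) ht
  simp only [one_div] at h0 ⊢
  simp at h0
  linarith

lemma main_eq (n k A B P Q : ℝ) (hn : n ≠ 0) (hA : A - B = n * (P - Q))
    (hs : k * P + (n - k) * Q = 1) :
    (1/n) * (k * A^2 + (n - k) * B^2) - (1/n^2) * (k * A + (n - k) * B)^2
      + (2/n) * (k * A + (n - k) * B) = A + B - n^2 * P * Q + 1 := by
  have key : n * (k * A^2 + (n - k) * B^2) - (k * A + (n - k) * B)^2
      + 2 * n * (k * A + (n - k) * B) = n^2 * (A + B) - n^4 * P * Q + n^2 := by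
    linear_combination (k * (n - k) * ((A - B) + n * (P - Q)) + n * (2*k - n)) * hA
      + (n^2 * ((n - k) * P + k * Q + 1)) * hs
  field_simp
  linear_combination key

/-- For a two-valued probability vector satisfying the extremum conditions,
    H''_0(p) = log(N²p₀q₀) − N²p₀q₀ + 1 < 0. -/
theorem Hpp0_two_valued_neg (N k : ℕ) (hk : 1 ≤ k) (hkN : k < N)
    (p₀ q₀ : ℝ) (hp₀ : p₀ ∈ Set.Ioo (0 : ℝ) 1) (hq₀ : q₀ ∈ Set.Ioo (0 : ℝ) 1)
    (hne : p₀ ≠ q₀)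
    (hcond : p₀ - q₀ = (1 / N) * (Real.log p₀ - Real.log q₀))
    (hsum : (k : ℝ) * p₀ + ((N : ℝ) - k) * q₀ = 1)
    (p : Fin N → ℝ) (hpdef : ∀ i, p i = if (i : ℕ) < k then p₀ else q₀) :
    2 * Real.log N + (1 / N) * ∑ i, (Real.log (p i)) ^ 2
      - (1 / (N : ℝ) ^ 2) * (∑ i, Real.log (p i)) ^ 2
      + (2 / N) * ∑ i, Real.log (p i)
      = Real.log ((N : ℝ) ^ 2 * p₀ * q₀) - (N : ℝ) ^ 2 * p₀ * q₀ + 1 ∧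
    2 * Real.log N + (1 / N) * ∑ i, (Real.log (p i)) ^ 2
      - (1 / (N : ℝ) ^ 2) * (∑ i, Real.log (p i)) ^ 2
      + (2 / N) * ∑ i, Real.log (p i) < 0 := by
  obtain ⟨hp0, hp1⟩ := hp₀
  obtain ⟨hq0, hq1⟩ := hq₀
  have hNn : 0 < N := lt_of_le_of_lt (Nat.zero_le k) hkN
  have hNpos : (0 : ℝ) < N := by exact_mod_cast hNn
  have hNne : (N : ℝ) ≠ 0 := ne_of_gt hNpos
  have h1 : ∑ i : Fin N, Real.log (p i)
      = (k : ℝ) * Real.log p₀ + ((N : ℝ) - k) * Real.log q₀ := by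
    rw [show (fun i : Fin N => Real.log (p i))
        = (fun i : Fin N => if (i : ℕ) < k then Real.log p₀ else Real.log q₀) from
      funext fun i => by rw [hpdef i]; exact apply_ite Real.log _ _ _]
    exact sum_ite_fin N k (le_of_lt hkN) _ _
  have h2 : ∑ i : Fin N, (Real.log (p i)) ^ 2
      = (k : ℝ) * (Real.log p₀) ^ 2 + ((N : ℝ) - k) * (Real.log q₀) ^ 2 := by
    rw [show (fun i : Fin N => (Real.log (p i)) ^ 2)
        = (fun i : Fin N => if (i : ℕ) < k then (Real.log p₀) ^ 2 else (Real.log q₀) ^ 2) from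
      funext fun i => by
        rw [hpdef i, apply_ite Real.log]
        exact apply_ite (· ^ 2) _ _ _]
    exact sum_ite_fin N k (le_of_lt hkN) _ _
  have hA : Real.log p₀ - Real.log q₀ = (N : ℝ) * (p₀ - q₀) := by
    rw [hcond]
    field_simp
  have hlogsplit : Real.log ((N : ℝ) ^ 2 * p₀ * q₀)
      = 2 * Real.log N + Real.log p₀ + Real.log q₀ := by
    rw [Real.log_mul (by positivity) (ne_of_gt hq0),
        Real.log_mul (by positivity) (ne_of_gt hp0), Real.log_pow]
    push_cast
    ring
  have heq := main_eq (N : ℝ) (k : ℝ) (Real.log p₀) (Real.log q₀) p₀ q₀ hNne hA hsum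
  have hmain : 2 * Real.log N + (1 / N) * ∑ i, (Real.log (p i)) ^ 2
      - (1 / (N : ℝ) ^ 2) * (∑ i, Real.log (p i)) ^ 2
      + (2 / N) * ∑ i, Real.log (p i)
      = Real.log ((N : ℝ) ^ 2 * p₀ * q₀) - (N : ℝ) ^ 2 * p₀ * q₀ + 1 := by
    rw [h1, h2, hlogsplit]
    linear_combination heq
  refine ⟨hmain, ?_⟩
  rw [hmain]
  -- negativity: log x - x + 1 < 0 for x > 0, x ≠ 1
  set x : ℝ := (N : ℝ) ^ 2 * p₀ * q₀ with hxdef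
  have hx0 : 0 < x := by positivity
  have hx1 : x ≠ 1 := by
    intro hc
    set u : ℝ := (N : ℝ) * p₀ with hudef
    set v : ℝ := (N : ℝ) * q₀ with hvdef
    have hu0 : 0 < u := by positivity
    have hv0 : 0 < v := by positivity
    have huv : u * v = 1 := by rw [hudef, hvdef, ← hc, hxdef]; ring
    have hune : u ≠ v := fun h => hne (mul_left_cancel₀ hNne h)
    have hv : v = u⁻¹ := eq_inv_of_mul_eq_one_right (by linarith [huv])
    have hlogu : Real.log u - Real.log v = u - v := by
      rw [hudef, hvdef, Real.log_mul hNne (ne_of_gt hp0),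
          Real.log_mul hNne (ne_of_gt hq0)]
      linear_combination hA
    have hlogv : Real.log v = - Real.log u := by rw [hv, Real.log_inv]
    have h2l : 2 * Real.log u = u - 1/u := by
      rw [hlogv] at hlogu
      rw [hv] at hlogu
      rw [one_div]
      linarith
    have hu1 : u ≠ 1 := by
      intro h
      apply hune
      rw [hv, h]; norm_num
    rcases lt_or_gt_of_ne hu1 with h | h
    · have hinv : 1 < 1/u := by rw [lt_div_iff₀ hu0]; linarith
      have := key_ineq (1/u) hinv
      rw [Real.log_div one_ne_zero (ne_of_gt hu0), Real.log_one] at this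
      have huu : 1 / (1/u) = u := by field_simp
      rw [huu] at this
      linarith
    · exact absurd h2l (ne_of_lt (key_ineq u h))
  have := Real.log_lt_sub_one_of_pos hx0 hx1
  linarith
end

section
/- If p_0, q_0 ∈ (0,1) are distinct, satisfy p_0 − q_0 = (1/N)(log p_0 − log q_0) and k·p_0 + (N−k)·q_0 = 1 for integers N > k ≥ 1, then N² p_0 q_0 ≠ 1. (Proof via the Lindemann–Weierstrass theorem: otherwise p_0, q_0 would be algebraic while log p_0 − log q_0 is transcendental.) -/
open Real

lemma aux_key (x : ℝ) (hx : 0 < x) (h : x - 1/x = 2 * Real.log x) : x = 1 := by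
  by_contra hne
  set f : ℝ → ℝ := fun y => y - 1/y - 2 * Real.log y with hf
  have hd : ∀ y : ℝ, 0 < y → HasDerivAt f (1 + 1/y^2 - 2/y) y := by
    intro y hy
    have hy0 : y ≠ 0 := ne_of_gt hy
    have h1 : HasDerivAt (fun y : ℝ => y) 1 y := hasDerivAt_id y
    have h2 : HasDerivAt (fun y : ℝ => 1/y) (-(1/y^2)) y := by
      simpa [one_div] using (hasDerivAt_inv hy0)
    have h3 : HasDerivAt (fun y : ℝ => 2 * Real.log y) (2 * y⁻¹) y :=
      (Real.hasDerivAt_log hy0).const_mul 2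
    have := (h1.sub h2).sub h3
    exact this.congr_deriv (by ring)
  have hderiv : ∀ y : ℝ, 0 < y → deriv f y = 1 + 1/y^2 - 2/y := fun y hy => (hd y hy).deriv
  have hpos : ∀ y : ℝ, 0 < y → y ≠ 1 → 0 < 1 + 1/y^2 - 2/y := by
    intro y hy hy1
    have h2 : (0:ℝ) < (y-1)^2 := by
      have h4 : y - 1 ≠ 0 := sub_ne_zero.mpr hy1
      positivity
    have h3 : (0:ℝ) < y^2 := by positivity
    have : 1 + 1/y^2 - 2/y = (y-1)^2 / y^2 := by field_simp; ring
    rw [this]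
    exact div_pos h2 h3
  have hcont : ∀ a b : ℝ, 0 < a → ContinuousOn f (Set.Icc a b) := by
    intro a b ha
    apply ContinuousOn.sub
    · apply ContinuousOn.sub continuousOn_id
      apply ContinuousOn.div continuousOn_const continuousOn_id
      intro y hy
      exact ne_of_gt (lt_of_lt_of_le ha hy.1)
    · exact continuousOn_const.mul (Real.continuousOn_log.mono (by
        intro y hy
        exact Set.mem_compl_singleton_iff.mpr (ne_of_gt (lt_of_lt_of_le ha hy.1))))
  have hf1 : f 1 = 0 := by simp [hf]
  have hfx : f x = 0 := by simp only [hf]; linarith [h]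
  rcases lt_or_gt_of_ne hne with hlt | hgt
  · -- x < 1 : f strictly mono on [x,1], so f x < f 1 = 0
    have hmono : StrictMonoOn f (Set.Icc x 1) := by
      apply strictMonoOn_of_deriv_pos (convex_Icc x 1) (hcont x 1 hx)
      intro y hy
      rw [interior_Icc] at hy
      have hy0 : 0 < y := lt_trans hx hy.1
      rw [hderiv y hy0]
      exact hpos y hy0 (ne_of_lt hy.2)
    have := hmono (Set.left_mem_Icc.mpr hlt.le) (Set.right_mem_Icc.mpr hlt.le) hlt
    rw [hf1, hfx] at this
    exact lt_irrefl 0 this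
  · -- 1 < x
    have hmono : StrictMonoOn f (Set.Icc 1 x) := by
      apply strictMonoOn_of_deriv_pos (convex_Icc 1 x) (hcont 1 x one_pos)
      intro y hy
      rw [interior_Icc] at hy
      have hy0 : 0 < y := lt_trans one_pos hy.1
      rw [hderiv y hy0]
      exact hpos y hy0 (ne_of_gt hy.1)
    have := hmono (Set.left_mem_Icc.mpr hgt.le) (Set.right_mem_Icc.mpr hgt.le) hgt
    rw [hf1, hfx] at this
    exact lt_irrefl 0 this

/-- Under the extremum conditions, N²p₀q₀ cannot equal 1. -/
theorem N_sq_p0_q0_ne_one (N k : ℕ) (hk : 1 ≤ k) (hkN : k < N)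
    (p₀ q₀ : ℝ) (hp₀ : p₀ ∈ Set.Ioo (0 : ℝ) 1) (hq₀ : q₀ ∈ Set.Ioo (0 : ℝ) 1)
    (hne : p₀ ≠ q₀)
    (hcond : p₀ - q₀ = (1 / N) * (Real.log p₀ - Real.log q₀))
    (hsum : (k : ℝ) * p₀ + ((N : ℝ) - k) * q₀ = 1) :
    (N : ℝ) ^ 2 * p₀ * q₀ ≠ 1 := by
  intro h1
  have hNpos : 0 < (N : ℝ) := by
    have : 0 < N := lt_of_le_of_lt (Nat.zero_le k) hkN
    exact_mod_cast this
  have hN0 : (N : ℝ) ≠ 0 := ne_of_gt hNpos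
  have hp : 0 < p₀ := hp₀.1
  have hq : 0 < q₀ := hq₀.1
  set x : ℝ := (N : ℝ) * p₀ with hxdef
  have hx : 0 < x := mul_pos hNpos hp
  have hx0 : x ≠ 0 := ne_of_gt hx
  have hq₀eq : q₀ = 1 / ((N : ℝ) * x) := by
    have : (N:ℝ) * x * q₀ = 1 := by rw [hxdef]; linarith [h1]; 
    field_simp at this ⊢
    linarith [this]
  have hNq : (N : ℝ) * q₀ = 1 / x := by
    rw [hq₀eq]; field_simp
  have hlogp : Real.log p₀ = Real.log x - Real.log N := by
    have : p₀ = x / N := by rw [hxdef]; field_simp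
    rw [this, Real.log_div hx0 hN0]
  have hlogq : Real.log q₀ = -(Real.log N + Real.log x) := by
    rw [hq₀eq, one_div, Real.log_inv, Real.log_mul hN0 hx0]
  have hmain : x - 1/x = 2 * Real.log x := by
    have h2 : (N:ℝ) * (p₀ - q₀) = Real.log p₀ - Real.log q₀ := by
      rw [hcond]; field_simp
    rw [hlogp, hlogq] at h2
    have h3 : (N:ℝ) * p₀ - (N:ℝ) * q₀ = x - 1/x := by
      rw [hNq]
    nlinarith [h2, h3]
  have hx1 : x = 1 := aux_key x hx hmain
  apply hne
  have hp1 : p₀ = 1 / N := by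
    have : (N:ℝ) * p₀ = 1 := by rw [← hxdef, hx1]
    field_simp
    linarith
  have hq1 : q₀ = 1 / N := by
    have : (N:ℝ) * q₀ = 1 := by rw [hNq, hx1]; norm_num
    field_simp
    linarith
  rw [hp1, hq1]
end

section
/- Let p be a fixed probability vector with p_k = 0 for k ≤ N_1 and p_k > 0 for k > N_1, and let p(ε) have entries p_k(ε) = c_k ε for k ≤ N_1 and p_k(ε) = p_k + c_k ε for k > N_1, with ∑ c_k = 0. If N_1 ≥ 1 and some c_k > 0 for k ≤ N_1 (with all c_k ∈ [0,1] for k ≤ N_1), then the Shannon entropies satisfy (H(p) − H(p(ε))) / (ε log ε) → ∑_{k=1}^{N_1} c_k as ε → 0+. -/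
open Real Filter Finset

private lemma aux_inv_log : Tendsto (fun ε : ℝ => (Real.log ε)⁻¹)
    (nhdsWithin 0 (Set.Ioi 0)) (nhds 0) := by
  have hlog : Tendsto Real.log (nhdsWithin 0 (Set.Ioi 0)) atBot :=
    Real.tendsto_log_nhdsGT_zero
  have h1 : Tendsto (fun ε : ℝ => -Real.log ε) (nhdsWithin 0 (Set.Ioi 0)) atTop :=
    tendsto_neg_atBot_atTop.comp hlog
  have := (tendsto_inv_atTop_zero.comp h1).neg
  simpa [inv_neg] using this

private lemma aux_zero_atom (c : ℝ) (hc : 0 ≤ c) :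
    Tendsto (fun ε : ℝ => (c * ε * Real.log (c * ε)) / (ε * Real.log ε))
      (nhdsWithin 0 (Set.Ioi 0)) (nhds c) := by
  rcases eq_or_lt_of_le hc with h0 | h0
  · simp [← h0]
  · have hmain : Tendsto (fun ε : ℝ => c * (Real.log c * (Real.log ε)⁻¹) + c)
        (nhdsWithin 0 (Set.Ioi 0)) (nhds c) := by
      have := ((tendsto_const_nhds (x := Real.log c)).mul aux_inv_log).const_mul c |>.add
        (tendsto_const_nhds (x := c))
      simpa using this
    refine hmain.congr' ?_
    filter_upwards [self_mem_nhdsWithin,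
      Ioo_mem_nhdsGT_of_mem (by norm_num : (0:ℝ) ∈ Set.Ico 0 1)] with ε hε hε1
    have hε0 : (0:ℝ) < ε := hε
    have hlogne : Real.log ε ≠ 0 := ne_of_lt (Real.log_neg hε0 hε1.2)
    rw [Real.log_mul (ne_of_gt h0) (ne_of_gt hε0)]
    field_simp

private lemma aux_pos_atom (p c : ℝ) (hp : 0 < p) :
    Tendsto (fun ε : ℝ => ((p + c * ε) * Real.log (p + c * ε) - p * Real.log p) /
        (ε * Real.log ε))
      (nhdsWithin 0 (Set.Ioi 0)) (nhds 0) := by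
  set F : ℝ → ℝ := fun ε => (p + c * ε) * Real.log (p + c * ε) with hF
  have hderiv : HasDerivAt F ((Real.log p + 1) * c) 0 := by
    have h2 : HasDerivAt (fun ε : ℝ => p + c * ε) c 0 := by
      simpa using ((hasDerivAt_id (0:ℝ)).const_mul c).const_add p
    have h1 : HasDerivAt (fun x : ℝ => x * Real.log x) (Real.log (p + c * 0) + 1)
        (p + c * 0) := Real.hasDerivAt_mul_log (by simpa using ne_of_gt hp)
    have := h1.comp 0 h2
    simpa [hF, Function.comp_def] using this
  have hslope : Tendsto (fun ε : ℝ => (F ε - F 0) / ε)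
      (nhdsWithin 0 (Set.Ioi 0)) (nhds ((Real.log p + 1) * c)) := by
    have := (hasDerivAt_iff_tendsto_slope.mp hderiv).mono_left
      (nhdsWithin_mono 0 (fun x hx => ne_of_gt hx))
    refine this.congr fun ε => ?_
    simp [slope_def_field, div_eq_mul_inv]
  have hmain := hslope.mul aux_inv_log
  rw [mul_zero] at hmain
  refine hmain.congr fun ε => ?_
  simp only [hF]
  rw [div_mul_eq_div_div, div_eq_mul_inv]
  ring_nf

/-- If some zero probability is perturbed (N₁ ≥ 1, some c_k > 0 for k ≤ N₁), then
    (H(p) − H(p(ε)))/(ε log ε) → ∑_{k ≤ N₁} c_k as ε → 0+. -/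
theorem shannon_perturb_zero_atoms (N N₁ : ℕ) (hN₁ : 1 ≤ N₁) (hN : N₁ < N)
    (p : Fin N → ℝ)
    (hp0 : ∀ k : Fin N, (k : ℕ) < N₁ → p k = 0)
    (hppos : ∀ k : Fin N, N₁ ≤ (k : ℕ) → 0 < p k)
    (hsum : ∑ k, p k = 1)
    (c : Fin N → ℝ)
    (hc1 : ∀ k : Fin N, (k : ℕ) < N₁ → c k ∈ Set.Icc (0 : ℝ) 1)
    (hc2 : ∀ k : Fin N, N₁ ≤ (k : ℕ) → |c k| ≤ 1)
    (hcsum : ∑ k, c k = 0)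
    (hcpos : ∃ k : Fin N, (k : ℕ) < N₁ ∧ 0 < c k) :
    Tendsto (fun ε : ℝ =>
        ((-∑ k, p k * Real.log (p k)) -
          (-∑ k : Fin N, (if (k : ℕ) < N₁ then c k * ε else p k + c k * ε) *
              Real.log (if (k : ℕ) < N₁ then c k * ε else p k + c k * ε)))
          / (ε * Real.log ε))
      (nhdsWithin 0 (Set.Ioi 0))
      (nhds (∑ k ∈ Finset.univ.filter (fun k : Fin N => (k : ℕ) < N₁), c k)) := by
  have key : ∀ ε : ℝ,
      ((-∑ k, p k * Real.log (p k)) -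
        (-∑ k : Fin N, (if (k : ℕ) < N₁ then c k * ε else p k + c k * ε) *
            Real.log (if (k : ℕ) < N₁ then c k * ε else p k + c k * ε)))
        / (ε * Real.log ε)
      = ∑ k : Fin N,
          ((if (k : ℕ) < N₁ then c k * ε else p k + c k * ε) *
              Real.log (if (k : ℕ) < N₁ then c k * ε else p k + c k * ε)
            - p k * Real.log (p k)) / (ε * Real.log ε) := by
    intro ε
    rw [← Finset.sum_div, Finset.sum_sub_distrib, neg_sub_neg]
  have hval : (∑ k ∈ Finset.univ.filter (fun k : Fin N => (k : ℕ) < N₁), c k)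
      = ∑ k : Fin N, (if (k : ℕ) < N₁ then c k else 0) := by
    rw [Finset.sum_filter]
  rw [hval]
  have := tendsto_finset_sum (Finset.univ : Finset (Fin N))
    (f := fun (k : Fin N) (ε : ℝ) =>
      ((if (k : ℕ) < N₁ then c k * ε else p k + c k * ε) *
          Real.log (if (k : ℕ) < N₁ then c k * ε else p k + c k * ε)
        - p k * Real.log (p k)) / (ε * Real.log ε))
    (a := fun k : Fin N => if (k : ℕ) < N₁ then c k else 0)
    (x := nhdsWithin (0:ℝ) (Set.Ioi 0)) ?_
  · exact (this.congr fun ε => (key ε).symm)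
  · intro k _
    by_cases hk : (k : ℕ) < N₁
    · simp only [if_pos hk, hp0 k hk, zero_mul, sub_zero]
      exact aux_zero_atom (c k) (hc1 k hk).1
    · simp only [if_neg hk]
      exact aux_pos_atom (p k) (c k) (hppos k (le_of_not_gt hk))
end

section
/- Let 0 < α < 1, p a probability vector with zeros exactly at indices k ≤ N_1 (N_1 ≥ 1), and perturbed vector p(ε) with p_k(ε) = c_k ε for k ≤ N_1 (some c_k > 0) and p_k(ε) = p_k + c_k ε for k > N_1, ∑ c_k = 0. Then (H_α(p) − H_α(p(ε)))/ε^α → (1/(α−1)) · (∑_{k≤N_1} c_k^α) / (∑_{k>N_1} p_k^α) as ε → 0+. -/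
open Real Filter Finset

/-- For 0 < α < 1, with zero atoms perturbed,
    (H_α(p) − H_α(p(ε)))/ε^α → (1/(α−1)) (∑_{k≤N₁} c_k^α)/(∑_{k>N₁} p_k^α). -/
theorem renyi_perturb_lt_one (N N₁ : ℕ) (hN₁ : 1 ≤ N₁) (hN : N₁ < N)
    (α : ℝ) (hα : 0 < α) (hα1 : α < 1)
    (p : Fin N → ℝ)
    (hp0 : ∀ k : Fin N, (k : ℕ) < N₁ → p k = 0)
    (hppos : ∀ k : Fin N, N₁ ≤ (k : ℕ) → 0 < p k)
    (hsum : ∑ k, p k = 1)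
    (c : Fin N → ℝ)
    (hc1 : ∀ k : Fin N, (k : ℕ) < N₁ → c k ∈ Set.Icc (0 : ℝ) 1)
    (hc2 : ∀ k : Fin N, N₁ ≤ (k : ℕ) → |c k| ≤ 1)
    (hcsum : ∑ k, c k = 0)
    (hcpos : ∃ k : Fin N, (k : ℕ) < N₁ ∧ 0 < c k) :
    Tendsto (fun ε : ℝ =>
        ((1 / (1 - α)) * Real.log (∑ k, p k ^ α) -
          (1 / (1 - α)) * Real.log
            (∑ k : Fin N, (if (k : ℕ) < N₁ then c k * ε else p k + c k * ε) ^ α))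
          / ε ^ α)
      (nhdsWithin 0 (Set.Ioi 0))
      (nhds ((1 / (α - 1)) *
        (∑ k ∈ Finset.univ.filter (fun k : Fin N => (k : ℕ) < N₁), (c k) ^ α) /
        (∑ k ∈ Finset.univ.filter (fun k : Fin N => N₁ ≤ (k : ℕ)), (p k) ^ α))) := by
  have hαne : α ≠ 0 := ne_of_gt hα
  have h1α : (1:ℝ) - α ≠ 0 := by linarith
  have hα1' : α - 1 ≠ 0 := by intro h; apply h1α; linarith
  set L := nhdsWithin (0:ℝ) (Set.Ioi 0) with hL
  set A := ∑ k ∈ Finset.univ.filter (fun k : Fin N => (k : ℕ) < N₁), (c k) ^ α with hAdef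
  set S₀ := ∑ k ∈ Finset.univ.filter (fun k : Fin N => N₁ ≤ (k : ℕ)), (p k) ^ α with hS₀def
  set S : ℝ → ℝ := fun ε =>
    ∑ k : Fin N, (if (k : ℕ) < N₁ then c k * ε else p k + c k * ε) ^ α with hSdef
  set f : ℝ → ℝ := fun ε =>
    ∑ k ∈ Finset.univ.filter (fun k : Fin N => N₁ ≤ (k : ℕ)), (p k + c k * ε) ^ α with hfdef
  -- positivity
  have hS₀pos : 0 < S₀ := by
    apply Finset.sum_pos
    · intro k hk
      exact Real.rpow_pos_of_pos (hppos k (by simpa using hk)) α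
    · exact ⟨⟨N₁, hN⟩, by simp⟩
  have hApos : 0 < A := by
    obtain ⟨k, hk, hck⟩ := hcpos
    apply Finset.sum_pos' (fun j hj => Real.rpow_nonneg (hc1 j (by simpa using hj)).1 α)
    exact ⟨k, by simpa using hk, Real.rpow_pos_of_pos hck α⟩
  have hS₀ne : S₀ ≠ 0 := ne_of_gt hS₀pos
  -- first sum equals S₀
  have hsum_p : ∑ k, p k ^ α = S₀ := by
    rw [hS₀def, ← Finset.sum_filter_add_sum_filter_not Finset.univ
      (fun k : Fin N => N₁ ≤ (k : ℕ)) (fun k => p k ^ α)]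
    have : ∑ k ∈ Finset.univ.filter (fun k : Fin N => ¬ N₁ ≤ (k : ℕ)), p k ^ α = 0 := by
      apply Finset.sum_eq_zero
      intro k hk
      rw [hp0 k (by simpa using hk), Real.zero_rpow hαne]
    rw [this, add_zero]
  -- splitting of S
  have hsplit : ∀ ε : ℝ, 0 < ε → S ε = A * ε ^ α + f ε := by
    intro ε hε
    rw [hSdef]
    simp only
    rw [← Finset.sum_filter_add_sum_filter_not Finset.univ
      (fun k : Fin N => (k : ℕ) < N₁)]
    congr 1
    · rw [hAdef, Finset.sum_mul]
      apply Finset.sum_congr rfl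
      intro k hk
      have hk' : (k : ℕ) < N₁ := by simpa using hk
      rw [if_pos hk', Real.mul_rpow (hc1 k hk').1 (le_of_lt hε)]
    · rw [hfdef]
      apply Finset.sum_congr
      · ext k; simp [not_lt]
      · intro k hk
        have hk' : ¬ (k : ℕ) < N₁ := by simpa [not_lt] using (Finset.mem_filter.mp hk).2
        rw [if_neg hk']
  have hf0 : f 0 = S₀ := by
    rw [hfdef, hS₀def]; simp
  -- step: (f ε - S₀)/ε^α → 0
  have h1 : Tendsto (fun ε => (f ε - S₀) / ε ^ α) L (nhds 0) := by
    have : (fun ε => (f ε - S₀) / ε ^ α) = fun ε =>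
        ∑ k ∈ Finset.univ.filter (fun k : Fin N => N₁ ≤ (k : ℕ)),
          ((p k + c k * ε) ^ α - p k ^ α) / ε ^ α := by
      funext ε
      rw [← Finset.sum_div, hfdef, hS₀def, ← Finset.sum_sub_distrib]
    rw [this]
    have h0 : (0:ℝ) = ∑ k ∈ Finset.univ.filter (fun k : Fin N => N₁ ≤ (k : ℕ)), (0:ℝ) := by
      simp
    rw [h0]
    apply tendsto_finset_sum
    intro k hk
    have hpk : 0 < p k := hppos k (by simpa using hk)
    -- derivative of ε ↦ (p k + c k * ε)^α at 0
    have hinner : HasDerivAt (fun ε : ℝ => p k + c k * ε) (c k) 0 := by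
      simpa using ((hasDerivAt_id (0:ℝ)).const_mul (c k)).const_add (p k)
    have houter : HasDerivAt (fun x : ℝ => x ^ α) (α * (p k) ^ (α - 1)) (p k + c k * 0) := by
      rw [mul_zero, add_zero]
      exact Real.hasDerivAt_rpow_const (Or.inl (ne_of_gt hpk))
    have hd : HasDerivAt (fun ε : ℝ => (p k + c k * ε) ^ α)
        (α * (p k) ^ (α - 1) * c k) 0 := by have := houter.comp 0 hinner; exact this
    have hslope : Tendsto (fun ε : ℝ => ((p k + c k * ε) ^ α - p k ^ α) / ε) L
        (nhds (α * (p k) ^ (α - 1) * c k)) := by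
      have := hasDerivAt_iff_tendsto_slope.mp hd
      have hmono : L ≤ nhdsWithin (0:ℝ) {(0:ℝ)}ᶜ := by
        apply nhdsWithin_mono
        intro x hx
        exact ne_of_gt hx
      have := this.mono_left hmono
      apply this.congr'
      filter_upwards [self_mem_nhdsWithin] with ε hε
      simp [slope_def_field]
    have hpow : Tendsto (fun ε : ℝ => ε ^ (1 - α)) L (nhds 0) := by
      have : ContinuousAt (fun x : ℝ => x ^ (1 - α)) 0 :=
        Real.continuousAt_rpow_const 0 (1 - α) (Or.inr (by linarith))
      have h : Tendsto (fun x : ℝ => x ^ (1 - α)) L (nhds ((0:ℝ) ^ (1 - α))) :=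
        this.tendsto.mono_left nhdsWithin_le_nhds
      rw [Real.zero_rpow h1α] at h
      exact h
    have hprod := hslope.mul hpow
    rw [mul_zero] at hprod
    apply hprod.congr'
    filter_upwards [self_mem_nhdsWithin] with ε hε
    have hε' : (0:ℝ) < ε := hε
    have hεα : ε ^ α ≠ 0 := ne_of_gt (Real.rpow_pos_of_pos hε' α)
    have key : ε ^ α * ε ^ (1 - α) = ε := by
      rw [← Real.rpow_add hε']; simp
    field_simp
    rw [mul_assoc, mul_comm (ε ^ (1 - α)), key]
    ring
  -- u ε := (S ε - S₀)/ε^α → A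
  have hu : Tendsto (fun ε => (S ε - S₀) / ε ^ α) L (nhds A) := by
    have := (tendsto_const_nhds (x := A) (f := L)).add h1
    rw [add_zero] at this
    apply this.congr'
    filter_upwards [self_mem_nhdsWithin] with ε hε
    have hε' : (0:ℝ) < ε := hε
    have hεα : ε ^ α ≠ 0 := ne_of_gt (Real.rpow_pos_of_pos hε' α)
    rw [hsplit ε hε']
    field_simp
    ring
  -- S → S₀
  have hpowα : Tendsto (fun ε : ℝ => ε ^ α) L (nhds 0) := by
    have : ContinuousAt (fun x : ℝ => x ^ α) 0 :=
      Real.continuousAt_rpow_const 0 α (Or.inr (le_of_lt hα))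
    have h : Tendsto (fun x : ℝ => x ^ α) L (nhds ((0:ℝ) ^ α)) :=
      this.tendsto.mono_left nhdsWithin_le_nhds
    rw [Real.zero_rpow hαne] at h
    exact h
  have hStend : Tendsto S L (nhds S₀) := by
    have := (hu.mul hpowα).const_add S₀
    rw [mul_zero, add_zero] at this
    apply this.congr'
    filter_upwards [self_mem_nhdsWithin] with ε hε
    have hε' : (0:ℝ) < ε := hε
    have hεα : ε ^ α ≠ 0 := ne_of_gt (Real.rpow_pos_of_pos hε' α)
    field_simp
    ring
  -- eventually S ε > S₀
  have hev : ∀ᶠ ε in L, S₀ < S ε := by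
    have hugt : ∀ᶠ ε in L, 0 < (S ε - S₀) / ε ^ α := hu.eventually (lt_mem_nhds hApos)
    filter_upwards [hugt, self_mem_nhdsWithin] with ε h hε
    have hε' : (0:ℝ) < ε := hε
    have hεα : 0 < ε ^ α := Real.rpow_pos_of_pos hε' α
    nlinarith [mul_pos h hεα, (div_mul_cancel₀ (S ε - S₀) (ne_of_gt hεα))]
  -- log slope
  have hlog : Tendsto (fun ε => (Real.log (S ε) - Real.log S₀) / (S ε - S₀)) L
      (nhds S₀⁻¹) := by
    have hd := Real.hasDerivAt_log hS₀ne
    have hsl := hasDerivAt_iff_tendsto_slope.mp hd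
    have hcomp : Tendsto S L (nhdsWithin S₀ {S₀}ᶜ) := by
      rw [tendsto_nhdsWithin_iff]
      refine ⟨hStend, ?_⟩
      filter_upwards [hev] with ε h
      exact ne_of_gt h
    have := hsl.comp hcomp
    apply this.congr
    intro ε
    simp [slope_def_field, div_eq_inv_mul]
  -- combine
  have hfinal := (hlog.const_mul (1 / (α - 1))).mul hu
  have hlim : 1 / (α - 1) * S₀⁻¹ * A = 1 / (α - 1) * A / S₀ := by
    field_simp
  rw [hlim] at hfinal
  apply hfinal.congr'
  filter_upwards [hev, self_mem_nhdsWithin] with ε hSg hε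
  have hε' : (0:ℝ) < ε := hε
  have hεα : ε ^ α ≠ 0 := ne_of_gt (Real.rpow_pos_of_pos hε' α)
  have hSne : S ε - S₀ ≠ 0 := by intro h; linarith [hSg, sub_eq_zero.mp h]
  have hSe : (∑ k : Fin N, (if (k : ℕ) < N₁ then c k * ε else p k + c k * ε) ^ α) = S ε := rfl
  rw [hsum_p, hSe]
  have h2 : (Real.log (S ε) - Real.log S₀) / (S ε - S₀) * ((S ε - S₀) / ε ^ α)
      = (Real.log (S ε) - Real.log S₀) / ε ^ α := by
    field_simp
  have h3 : (1 / (1 - α)) * Real.log S₀ - (1 / (1 - α)) * Real.log (S ε)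
      = 1 / (α - 1) * (Real.log (S ε) - Real.log S₀) := by
    field_simp
    ring
  rw [mul_assoc, h2, h3, mul_div_assoc]
end

section
/- For fixed λ > 0 and any α > 0, the Rényi entropy of the binomial distribution B(n, λ/n) converges, as n → ∞, to the Rényi entropy of the Poisson distribution with parameter λ; in particular for α ≠ 1, ∑_{k=0}^n (C(n,k)(λ/n)^k(1−λ/n)^{n−k})^α → ∑_{k=0}^∞ (e^{−λ} λ^k/k!)^α. -/
open Real Filter Finset

/-- Probability mass function of the binomial distribution B(n, λ/n). -/
noncomputable def binomProb (lam : ℝ) (n k : ℕ) : ℝ :=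
  (n.choose k : ℝ) * (lam / n) ^ k * (1 - lam / n) ^ (n - k)

/-- Probability mass function of the Poisson distribution with parameter λ. -/
noncomputable def poissonProb (lam : ℝ) (k : ℕ) : ℝ :=
  Real.exp (-lam) * lam ^ k / (Nat.factorial k)

lemma binom_tendsto (lam : ℝ) (k : ℕ) :
    Tendsto (fun n : ℕ => binomProb lam n k) atTop (nhds (poissonProb lam k)) := by
  have hT1 : Tendsto (fun n : ℕ => ∏ i ∈ range k, (1 - (i : ℝ) / n)) atTop (nhds 1) := by
    have := tendsto_finset_prod (f := fun (i : ℕ) (n : ℕ) => 1 - (i : ℝ) / n)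
      (x := atTop) (a := fun _ => 1) (range k)
      (fun i _ => by simpa using tendsto_const_nhds.sub (tendsto_const_div_atTop_nhds_zero_nat (i:ℝ)))
    simpa using this
  have hT2 : Tendsto (fun n : ℕ => (1 - lam / n) ^ n) atTop (nhds (Real.exp (-lam))) := by
    have := Real.tendsto_one_add_div_pow_exp (-lam)
    simpa [sub_eq_add_neg, neg_div] using this
  have hbase : Tendsto (fun n : ℕ => 1 - lam / n) atTop (nhds 1) := by
    simpa using tendsto_const_nhds.sub (tendsto_const_div_atTop_nhds_zero_nat lam)
  have hT3 : Tendsto (fun n : ℕ => (1 - lam / n) ^ k) atTop (nhds 1) := by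
    simpa using hbase.pow k
  have hmain : Tendsto (fun n : ℕ =>
      (lam ^ k / (Nat.factorial k : ℝ)) * (∏ i ∈ range k, (1 - (i : ℝ) / n)) *
        ((1 - lam / n) ^ n / (1 - lam / n) ^ k)) atTop
      (nhds (poissonProb lam k)) := by
    have h4 : Tendsto (fun n : ℕ => (1 - lam / n) ^ n / (1 - lam / n) ^ k) atTop
        (nhds (Real.exp (-lam) / 1)) := hT2.div hT3 one_ne_zero
    have h5 := (hT1.const_mul (lam ^ k / (Nat.factorial k : ℝ))).mul h4
    simp only [mul_one, div_one] at h5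
    have : poissonProb lam k = lam ^ k / (Nat.factorial k : ℝ) * Real.exp (-lam) := by
      rw [poissonProb]; ring
    rw [this]
    exact h5
  refine hmain.congr' ?_
  filter_upwards [eventually_ge_atTop (k + 1), eventually_gt_atTop (Nat.ceil (|lam|))] with n hn hn2
  have hk : k ≤ n := le_trans (Nat.le_succ k) hn
  have hnpos : 0 < n := lt_of_lt_of_le (Nat.succ_pos k) hn
  have hn0 : (0:ℝ) < n := by exact_mod_cast hnpos
  have hn0' : (n:ℝ) ≠ 0 := ne_of_gt hn0
  have hlamlt : |lam| < n := lt_of_le_of_lt (Nat.le_ceil _) (by exact_mod_cast hn2)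
  have hne : (1 : ℝ) - lam / n ≠ 0 := by
    have : lam / n < 1 := by
      rw [div_lt_one hn0]; exact lt_of_le_of_lt (le_abs_self lam) hlamlt
    linarith
  have hfk : (Nat.factorial k : ℝ) ≠ 0 := by positivity
  have hchoose : (n.choose k : ℝ) = (∏ i ∈ range k, ((n : ℝ) - i)) / (Nat.factorial k : ℝ) := by
    have h1 : (n.descFactorial k : ℝ) = ∏ i ∈ range k, ((n : ℝ) - i) := by
      rw [Nat.descFactorial_eq_prod_range]
      push_cast
      refine Finset.prod_congr rfl fun i hi => ?_
      rw [Nat.cast_sub (le_trans (le_of_lt (mem_range.mp hi)) hk)]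
    rw [eq_div_iff hfk, ← h1, Nat.descFactorial_eq_factorial_mul_choose]
    push_cast; ring
  have hprod : ∏ i ∈ range k, (1 - (i:ℝ)/n) = (∏ i ∈ range k, ((n:ℝ) - i)) / (n:ℝ) ^ k := by
    have hc : ((n:ℝ))^k = ∏ _i ∈ range k, (n:ℝ) := by rw [prod_const, card_range]
    rw [hc, ← Finset.prod_div_distrib]
    exact Finset.prod_congr rfl fun i _ => by field_simp
  rw [binomProb, pow_sub₀ _ hne hk, hprod, hchoose]
  field_simp
  have h1 : (n:ℝ)^k * (n:ℝ)⁻¹^k = 1 := by rw [← mul_pow, mul_inv_cancel₀ hn0', one_pow]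
  linear_combination (-((lam ^ k * ∏ x ∈ range k, ((n:ℝ) - x)) * (-(lam * (n:ℝ)⁻¹) + n * (n:ℝ)⁻¹)⁻¹ ^ k * (-(lam * (n:ℝ)⁻¹) + n * (n:ℝ)⁻¹) ^ n)) * h1

lemma summable_pois_pow (lam : ℝ) (hlam : 0 < lam) (α : ℝ) (hα : 0 < α) :
    Summable (fun k : ℕ => (lam ^ k / (Nat.factorial k : ℝ)) ^ α) := by
  apply summable_of_ratio_norm_eventually_le (r := 1/2) (by norm_num)
  have hrat : Tendsto (fun k : ℕ => (lam / (k + 1 : ℝ)) ^ α) atTop (nhds 0) := by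
    have h1 : Tendsto (fun k : ℕ => lam / (k + 1 : ℝ)) atTop (nhds 0) := by
      have := tendsto_one_div_add_atTop_nhds_zero_nat.const_mul lam
      simpa [div_eq_mul_inv] using this
    have h2 : ContinuousAt (fun x : ℝ => x ^ α) 0 :=
      Real.continuousAt_rpow_const 0 α (Or.inr hα.le)
    have := h2.tendsto.comp h1
    simpa [Function.comp_def, Real.zero_rpow hα.ne'] using this
  have hev : ∀ᶠ k : ℕ in atTop, (lam / (k + 1 : ℝ)) ^ α ≤ 1/2 :=
    hrat.eventually_le_const (by norm_num)
  filter_upwards [hev] with k hk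
  have hterm : ∀ j : ℕ, (0:ℝ) ≤ lam ^ j / (Nat.factorial j : ℝ) := fun j => by positivity
  have key : lam ^ (k+1) / (Nat.factorial (k+1) : ℝ)
      = (lam ^ k / (Nat.factorial k : ℝ)) * (lam / ((k:ℝ) + 1)) := by
    rw [Nat.factorial_succ]
    push_cast
    field_simp
    ring
  rw [Real.norm_eq_abs, Real.norm_eq_abs, abs_of_nonneg (Real.rpow_nonneg (hterm _) _),
    abs_of_nonneg (Real.rpow_nonneg (hterm _) _), key,
    Real.mul_rpow (hterm k) (by positivity)]
  calc (lam ^ k / (Nat.factorial k : ℝ)) ^ α * (lam / ((k:ℝ) + 1)) ^ α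
      ≤ (lam ^ k / (Nat.factorial k : ℝ)) ^ α * (1/2) :=
        mul_le_mul_of_nonneg_left hk (Real.rpow_nonneg (hterm k) _)
    _ = 1/2 * (lam ^ k / (Nat.factorial k : ℝ)) ^ α := by ring

lemma binomProb_nonneg {lam : ℝ} (hlam : 0 ≤ lam) {n : ℕ} (hn : lam ≤ n) (k : ℕ) :
    0 ≤ binomProb lam n k := by
  have h1 : (0:ℝ) ≤ lam / n := by positivity
  have h2 : (0:ℝ) ≤ 1 - lam / n := by
    rcases Nat.eq_zero_or_pos n with h | h
    · subst h; simp
    · have hn0 : (0:ℝ) < n := by exact_mod_cast h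
      have := (div_le_one hn0).mpr hn
      linarith
  exact mul_nonneg (mul_nonneg (by positivity) (pow_nonneg h1 k)) (pow_nonneg h2 _)

lemma binomProb_sum {lam : ℝ} {n : ℕ} (hn0 : 0 < n) :
    ∑ k ∈ range (n + 1), binomProb lam n k = 1 := by
  have this1 : (lam / (n:ℝ) + (1 - lam / n)) = 1 := by ring
  calc ∑ k ∈ range (n + 1), binomProb lam n k
      = ∑ m ∈ range (n + 1), (lam / (n:ℝ)) ^ m * (1 - lam / n) ^ (n - m) * (n.choose m : ℝ) :=
        Finset.sum_congr rfl fun k _ => by rw [binomProb]; ring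
    _ = (lam / (n:ℝ) + (1 - lam / n)) ^ n := (add_pow (lam / (n:ℝ)) (1 - lam / n) n).symm
    _ = 1 := by rw [this1, one_pow]

lemma binomProb_le_one {lam : ℝ} (hlam : 0 ≤ lam) {n : ℕ} (hn : lam ≤ n) (hn0 : 0 < n) (k : ℕ) :
    binomProb lam n k ≤ 1 := by
  by_cases hk : k ≤ n
  · calc binomProb lam n k
        ≤ ∑ j ∈ range (n + 1), binomProb lam n j :=
          Finset.single_le_sum (fun j _ => binomProb_nonneg hlam hn j)
            (mem_range.mpr (Nat.lt_succ_of_le hk))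
      _ = 1 := binomProb_sum hn0
  · have : n.choose k = 0 := Nat.choose_eq_zero_of_lt (lt_of_not_ge hk)
    simp [binomProb, this]

lemma binomProb_le {lam : ℝ} (hlam : 0 ≤ lam) {n : ℕ} (hn : lam ≤ n) (hn0 : 0 < n) (k : ℕ) :
    binomProb lam n k ≤ lam ^ k / (Nat.factorial k : ℝ) := by
  have hnR : (0:ℝ) < n := by exact_mod_cast hn0
  have h2 : (0:ℝ) ≤ 1 - lam / n := by
    have := (div_le_one hnR).mpr hn; linarith
  have h2' : (1 : ℝ) - lam / n ≤ 1 := by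
    have : 0 ≤ lam / n := by positivity
    linarith
  have hc : (n.choose k : ℝ) ≤ (n:ℝ) ^ k / (Nat.factorial k : ℝ) := by
    have := Nat.choose_le_pow_div k n (α := ℝ)
    simpa using this
  calc binomProb lam n k
      ≤ ((n:ℝ) ^ k / (Nat.factorial k : ℝ)) * (lam / n) ^ k * 1 := by
        refine mul_le_mul (mul_le_mul_of_nonneg_right hc (by positivity))
          (pow_le_one₀ h2 h2') (pow_nonneg h2 _) (by positivity)
    _ = lam ^ k / (Nat.factorial k : ℝ) := by
        rw [div_pow]
        field_simp

lemma binomProb_pos {lam : ℝ} (hlam : 0 < lam) {n k : ℕ} (hn : lam < n) (hk : k ≤ n) :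
    0 < binomProb lam n k := by
  have hnR : (0:ℝ) < n := lt_trans hlam hn
  have h1 : (0:ℝ) < lam / n := by positivity
  have h2 : (0:ℝ) < 1 - lam / n := by
    have := (div_lt_one hnR).mpr hn; linarith
  have hc : 0 < (n.choose k : ℝ) := by exact_mod_cast Nat.choose_pos hk
  exact mul_pos (mul_pos hc (pow_pos h1 k)) (pow_pos h2 _)


lemma poissonProb_pos {lam : ℝ} (hlam : 0 < lam) (k : ℕ) : 0 < poissonProb lam k := by
  have h1 : (0:ℝ) < Nat.factorial k := by exact_mod_cast Nat.factorial_pos k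
  exact div_pos (mul_pos (Real.exp_pos _) (pow_pos hlam k)) h1

lemma neg_mul_log_le {p : ℝ} (hp : 0 < p) (hp1 : p ≤ 1) : |p * Real.log p| ≤ 2 * Real.sqrt p := by
  have hs : 0 < Real.sqrt p := Real.sqrt_pos.mpr hp
  have hlog : -Real.log p ≤ 2 / Real.sqrt p := by
    have h1 : Real.log (1 / Real.sqrt p) ≤ 1 / Real.sqrt p - 1 :=
      Real.log_le_sub_one_of_pos (by positivity)
    rw [one_div, Real.log_inv] at h1
    have h2 : Real.log (Real.sqrt p) = Real.log p / 2 := Real.log_sqrt hp.le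
    rw [h2] at h1
    have h3 : (0:ℝ) < (Real.sqrt p)⁻¹ := by positivity
    rw [div_eq_mul_inv]
    linarith
  have h4 : p * Real.log p ≤ 0 := by nlinarith [Real.log_nonpos hp.le hp1]
  have habs : |p * Real.log p| = p * (-Real.log p) := by
    rw [abs_of_nonpos h4]; ring
  rw [habs]
  calc p * (-Real.log p) ≤ p * (2 / Real.sqrt p) :=
        mul_le_mul_of_nonneg_left hlog hp.le
    _ = 2 * (p / Real.sqrt p) := by ring
    _ = 2 * Real.sqrt p := by rw [Real.div_sqrt]

lemma tendsto_sum_pow (lam : ℝ) (hlam : 0 < lam) (α : ℝ) (hα : 0 < α) :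
    Tendsto (fun n : ℕ => ∑ k ∈ Finset.range (n + 1), binomProb lam n k ^ α)
      atTop (nhds (∑' k : ℕ, poissonProb lam k ^ α)) := by
  set F : ℕ → ℕ → ℝ := fun n k => if k ≤ n then binomProb lam n k ^ α else 0 with hF
  have heq : ∀ n : ℕ, ∑' k, F n k = ∑ k ∈ Finset.range (n + 1), binomProb lam n k ^ α := by
    intro n
    rw [tsum_eq_sum (s := Finset.range (n + 1)) (fun k hk => by
      have hkn : ¬ k ≤ n := fun h => hk (mem_range.mpr (Nat.lt_succ_of_le h))
      simp [hF, hkn])]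
    exact Finset.sum_congr rfl fun k hk => by
      simp [hF, Nat.lt_succ_iff.mp (mem_range.mp hk)]
  have key : Tendsto (fun n => ∑' k, F n k) atTop (nhds (∑' k : ℕ, poissonProb lam k ^ α)) := by
    apply tendsto_tsum_of_dominated_convergence
      (bound := fun k => (lam ^ k / (Nat.factorial k : ℝ)) ^ α)
      (summable_pois_pow lam hlam α hα)
    · intro k
      have h1 : Tendsto (fun n : ℕ => binomProb lam n k ^ α) atTop
          (nhds (poissonProb lam k ^ α)) :=
        (binom_tendsto lam k).rpow_const (Or.inl (poissonProb_pos hlam k).ne')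
      refine h1.congr' ?_
      filter_upwards [eventually_ge_atTop k] with n hn
      simp [hF, hn]
    · filter_upwards [eventually_gt_atTop (Nat.ceil lam)] with n hn k
      have hlamn : lam < n := lt_of_le_of_lt (Nat.le_ceil _) (by exact_mod_cast hn)
      have hn0 : 0 < n := by
        by_contra h
        push_neg at h
        interval_cases n <;> simp_all <;> linarith
      by_cases hk : k ≤ n
      · simp only [hF, if_pos hk]
        rw [Real.norm_eq_abs, abs_of_nonneg (Real.rpow_nonneg (binomProb_nonneg hlam.le hlamn.le k) α)]
        exact Real.rpow_le_rpow (binomProb_nonneg hlam.le hlamn.le k)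
          (binomProb_le hlam.le hlamn.le hn0 k) hα.le
      · simp only [hF, if_neg hk, norm_zero]
        positivity
  exact key.congr heq

lemma tendsto_sum_shannon (lam : ℝ) (hlam : 0 < lam) :
    Tendsto (fun n : ℕ => ∑ k ∈ Finset.range (n + 1),
        binomProb lam n k * Real.log (binomProb lam n k))
      atTop (nhds (∑' k : ℕ, poissonProb lam k * Real.log (poissonProb lam k))) := by
  set F : ℕ → ℕ → ℝ := fun n k =>
    if k ≤ n then binomProb lam n k * Real.log (binomProb lam n k) else 0 with hF
  have heq : ∀ n : ℕ, ∑' k, F n k = ∑ k ∈ Finset.range (n + 1),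
      binomProb lam n k * Real.log (binomProb lam n k) := by
    intro n
    rw [tsum_eq_sum (s := Finset.range (n + 1)) (fun k hk => by
      have hkn : ¬ k ≤ n := fun h => hk (mem_range.mpr (Nat.lt_succ_of_le h))
      simp [hF, hkn])]
    exact Finset.sum_congr rfl fun k hk => by
      simp [hF, Nat.lt_succ_iff.mp (mem_range.mp hk)]
  have hg : Summable (fun k : ℕ => 2 * Real.sqrt (lam ^ k / (Nat.factorial k : ℝ))) := by
    have := (summable_pois_pow lam hlam (1/2) (by norm_num)).mul_left 2
    refine this.congr fun k => ?_
    rw [Real.sqrt_eq_rpow]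
  have key : Tendsto (fun n => ∑' k, F n k) atTop
      (nhds (∑' k : ℕ, poissonProb lam k * Real.log (poissonProb lam k))) := by
    apply tendsto_tsum_of_dominated_convergence
      (bound := fun k => 2 * Real.sqrt (lam ^ k / (Nat.factorial k : ℝ))) hg
    · intro k
      have h1 : Tendsto (fun n : ℕ => binomProb lam n k * Real.log (binomProb lam n k)) atTop
          (nhds (poissonProb lam k * Real.log (poissonProb lam k))) :=
        (binom_tendsto lam k).mul ((binom_tendsto lam k).log (poissonProb_pos hlam k).ne')
      refine h1.congr' ?_
      filter_upwards [eventually_ge_atTop k] with n hn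
      simp [hF, hn]
    · filter_upwards [eventually_gt_atTop (Nat.ceil lam)] with n hn k
      have hlamn : lam < n := lt_of_le_of_lt (Nat.le_ceil _) (by exact_mod_cast hn)
      have hn0 : 0 < n := by
        by_contra h
        push_neg at h
        interval_cases n <;> simp_all <;> linarith
      by_cases hk : k ≤ n
      · simp only [hF, if_pos hk]
        rw [Real.norm_eq_abs]
        calc |binomProb lam n k * Real.log (binomProb lam n k)|
            ≤ 2 * Real.sqrt (binomProb lam n k) :=
              neg_mul_log_le (binomProb_pos hlam hlamn hk)
                (binomProb_le_one hlam.le hlamn.le hn0 k)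
          _ ≤ 2 * Real.sqrt (lam ^ k / (Nat.factorial k : ℝ)) := by
              have := Real.sqrt_le_sqrt (binomProb_le hlam.le hlamn.le hn0 k)
              linarith
      · simp only [hF, if_neg hk, norm_zero]
        positivity
  exact key.congr heq

/-- The Rényi entropy of B(n, λ/n) converges to that of Poi(λ) for every α > 0;
    in particular for α ≠ 1 the sums ∑ (binomial pmf)^α converge to ∑ (Poisson pmf)^α. -/
theorem renyi_binomial_tendsto_poisson (lam : ℝ) (hlam : 0 < lam)
    (α : ℝ) (hα : 0 < α) :
    (α = 1 →
      Tendsto (fun n : ℕ =>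
          -∑ k ∈ Finset.range (n + 1),
              binomProb lam n k * Real.log (binomProb lam n k))
        atTop
        (nhds (-∑' k : ℕ, poissonProb lam k * Real.log (poissonProb lam k)))) ∧
    (α ≠ 1 →
      Tendsto (fun n : ℕ =>
          (1 / (1 - α)) * Real.log (∑ k ∈ Finset.range (n + 1), binomProb lam n k ^ α))
        atTop
        (nhds ((1 / (1 - α)) * Real.log (∑' k : ℕ, poissonProb lam k ^ α))) ∧
      Tendsto (fun n : ℕ => ∑ k ∈ Finset.range (n + 1), binomProb lam n k ^ α)
        atTop (nhds (∑' k : ℕ, poissonProb lam k ^ α))) := by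
  constructor
  · intro _
    exact (tendsto_sum_shannon lam hlam).neg
  · intro _
    have hC := tendsto_sum_pow lam hlam α hα
    refine ⟨?_, hC⟩
    have hsumm : Summable (fun k : ℕ => poissonProb lam k ^ α) := by
      have h := (summable_pois_pow lam hlam α hα).mul_left (Real.exp (-lam) ^ α)
      refine h.congr fun k => ?_
      rw [poissonProb, mul_div_assoc, Real.mul_rpow (Real.exp_pos _).le (by positivity)]
    have hLpos : 0 < ∑' k : ℕ, poissonProb lam k ^ α := by
      calc (0:ℝ) < poissonProb lam 0 ^ α := Real.rpow_pos_of_pos (poissonProb_pos hlam 0) α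
        _ ≤ ∑' k : ℕ, poissonProb lam k ^ α :=
          Summable.le_tsum hsumm 0 (fun k _ => Real.rpow_nonneg (poissonProb_pos hlam k).le α)
    have hlog := ((Real.continuousAt_log hLpos.ne').tendsto.comp hC).const_mul (1/(1-α))
    simpa [Function.comp] using hlog
end
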